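/- Let h be a Hessenberg function on {1,…,n} with m(Γ_h) = 2. Then for every nonnegative integer i, #{ω ∈ A_2(Γ_h) : asc(ω) = i} = Σ_{T ∈ SK_2(Γ_h)} #{ω' ∈ A(Γ_{h_T}) : asc(ω') = i − deg(T)} (a summand being zero when deg(T) > i). -/

import Mathlib

open scoped Classical

/-- `h` is a Hessenberg function on `{1,…,n}`. -/
def IsHessenberg (n : ℕ) (h : ℕ → ℕ) : Prop :=
  (∀ i, 1 ≤ i → i ≤ n → i ≤ h i ∧ h i ≤ n) ∧
  (∀ i, 1 ≤ i → i < n → h i ≤ h (i + 1))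

/-- `{j,i}` (with `j < i`) is an edge of the incomparability graph `Γ_h`. -/
def IsEdge (n : ℕ) (h : ℕ → ℕ) (j i : ℕ) : Prop :=
  1 ≤ j ∧ j < i ∧ i ≤ n ∧ i ≤ h j

/-- The orientation `ω` directs the edge between `u` and `v` from `u` to `v`. -/
def Dir (n : ℕ) (h : ℕ → ℕ) (ω : ℕ → ℕ → Bool) (u v : ℕ) : Prop :=
  (IsEdge n h u v ∧ ω u v = true) ∨ (IsEdge n h v u ∧ ω v u = false)

/-- `ω` is an acyclic orientation of `Γ_h`. -/
def AcyclicOr (n : ℕ) (h : ℕ → ℕ) (ω : ℕ → ℕ → Bool) : Prop :=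
  ∀ v, ¬ Relation.TransGen (Dir n h ω) v v

/-- `v` is a sink of the orientation `ω`. -/
def IsSinkAt (n : ℕ) (h : ℕ → ℕ) (ω : ℕ → ℕ → Bool) (v : ℕ) : Prop :=
  ∀ u, IsEdge n h u v ∨ IsEdge n h v u → Dir n h ω u v

/-- `sk(ω)`, the set of sinks of `ω`. -/
noncomputable def sinks (n : ℕ) (h : ℕ → ℕ) (ω : ℕ → ℕ → Bool) : Finset ℕ :=
  (Finset.Icc 1 n).filter (fun v => IsSinkAt n h ω v)

/-- `T` is a sink set of `Γ_h`. -/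
def IsSinkSet (n : ℕ) (h : ℕ → ℕ) (T : Finset ℕ) : Prop :=
  ∃ ω, AcyclicOr n h ω ∧ sinks n h ω = T

/-- `asc(ω)`: the number of edges `{j,i}`, `j < i`, directed from `j` to `i`. -/
noncomputable def ascOr (n : ℕ) (h : ℕ → ℕ) (ω : ℕ → ℕ → Bool) : ℕ :=
  (((Finset.Icc 1 n) ×ˢ (Finset.Icc 1 n)).filter
    (fun p => IsEdge n h p.1 p.2 ∧ ω p.1 p.2 = true)).card

/-- `m(Γ_h)`: the maximum sink-set size. -/
noncomputable def maxSinkSize (n : ℕ) (h : ℕ → ℕ) : ℕ :=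
  sSup {k | ∃ ω, AcyclicOr n h ω ∧ (sinks n h ω).card = k}

/-- A normalized orientation: `false` outside the edges of `Γ_h` (so that counting
normalized orientation functions is the same as counting orientations of `Γ_h`). -/
def NormOr (n : ℕ) (h : ℕ → ℕ) (ω : ℕ → ℕ → Bool) : Prop :=
  ∀ u v, ¬ IsEdge n h u v → ω u v = false

/-- `φ_T(j) = j − #{t ∈ T : t ≤ j}`. -/
def phiT (T : Finset ℕ) (j : ℕ) : ℕ := j - (T.filter (fun t => t ≤ j)).card

/-- The inverse of `φ_T` on `{1,…,n} ∖ T`. -/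
noncomputable def psiT (n : ℕ) (T : Finset ℕ) (r : ℕ) : ℕ :=
  sInf {i | 1 ≤ i ∧ i ≤ n ∧ i ∉ T ∧ phiT T i = r}

/-- The induced Hessenberg function `h_T`. -/
noncomputable def hFunT (n : ℕ) (h : ℕ → ℕ) (T : Finset ℕ) (r : ℕ) : ℕ :=
  phiT T (h (psiT n T r))

/-- `deg(T)`: the number of edges `{ℓ,ℓ'}` of `Γ_h` with `ℓ' ∈ T` and `ℓ < ℓ'`. -/
noncomputable def degT (n : ℕ) (h : ℕ → ℕ) (T : Finset ℕ) : ℕ :=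
  (((Finset.Icc 1 n) ×ˢ (Finset.Icc 1 n)).filter
    (fun p => IsEdge n h p.1 p.2 ∧ p.2 ∈ T)).card

namespace Stmt18

-- count function
noncomputable def cT (T : Finset ℕ) (i : ℕ) : ℕ := (T.filter (fun t => t ≤ i)).card

lemma cT_mono (T : Finset ℕ) {i j : ℕ} (hij : i ≤ j) : cT T i ≤ cT T j := by
  apply Finset.card_le_card
  intro t ht
  simp only [Finset.mem_filter] at *
  exact ⟨ht.1, le_trans ht.2 hij⟩

lemma cT_le {n : ℕ} {T : Finset ℕ} (hT : T ⊆ Finset.Icc 1 n) (i : ℕ) : cT T i ≤ i := by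
  have : T.filter (fun t => t ≤ i) ⊆ Finset.Icc 1 i := by
    intro t ht
    simp only [Finset.mem_filter, Finset.mem_Icc] at *
    exact ⟨(Finset.mem_Icc.1 (hT ht.1)).1, ht.2⟩
  calc cT T i ≤ (Finset.Icc 1 i).card := Finset.card_le_card this
    _ = i := by simp

lemma cT_lt {n : ℕ} {T : Finset ℕ} (hT : T ⊆ Finset.Icc 1 n) {i : ℕ} (hi : i ∉ T) :
    cT T i ≤ i - 1 := by
  have : T.filter (fun t => t ≤ i) ⊆ Finset.Icc 1 (i - 1) := by
    intro t ht
    simp only [Finset.mem_filter, Finset.mem_Icc] at *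
    refine ⟨(Finset.mem_Icc.1 (hT ht.1)).1, ?_⟩
    have : t ≠ i := fun he => hi (he ▸ ht.1)
    omega
  calc cT T i ≤ (Finset.Icc 1 (i-1)).card := Finset.card_le_card this
    _ = i - 1 := by simp

lemma cT_gap {n : ℕ} {T : Finset ℕ} (hT : T ⊆ Finset.Icc 1 n) {m j : ℕ} (hj : j ∉ T)
    (hmj : m < j) : cT T j ≤ cT T m + (j - m - 1) := by
  have hsub : T.filter (fun t => t ≤ j) ⊆ T.filter (fun t => t ≤ m) ∪ Finset.Icc (m+1) (j-1) := by
    intro t ht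
    simp only [Finset.mem_filter, Finset.mem_union, Finset.mem_Icc] at *
    rcases le_or_gt t m with hc | hc
    · exact Or.inl ⟨ht.1, hc⟩
    · have : t ≠ j := fun he => hj (he ▸ ht.1)
      exact Or.inr ⟨hc, by omega⟩
  calc cT T j ≤ _ := Finset.card_le_card hsub
    _ ≤ cT T m + (Finset.Icc (m+1) (j-1)).card := Finset.card_union_le _ _
    _ = cT T m + (j - m - 1) := by rw [Nat.card_Icc]; omega

lemma phiT_eq (T : Finset ℕ) (j : ℕ) : phiT T j = j - cT T j := rfl

lemma phiT_mono {T : Finset ℕ} {i j : ℕ} (hij : i ≤ j) : phiT T i ≤ phiT T j := by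
  rw [phiT_eq, phiT_eq]
  have h1 := cT_mono T hij
  have hgap : cT T j ≤ cT T i + (j - i) := by
    have hsub : T.filter (fun t => t ≤ j) ⊆ T.filter (fun t => t ≤ i) ∪ Finset.Icc (i+1) j := by
      intro t ht
      simp only [Finset.mem_filter, Finset.mem_union, Finset.mem_Icc] at *
      rcases le_or_gt t i with hc | hc
      · exact Or.inl ⟨ht.1, hc⟩
      · exact Or.inr ⟨hc, ht.2⟩
    calc cT T j ≤ _ := Finset.card_le_card hsub
      _ ≤ cT T i + (Finset.Icc (i+1) j).card := Finset.card_union_le _ _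
      _ = cT T i + (j - i) := by rw [Nat.card_Icc]; omega
  omega

lemma phiT_lt {n : ℕ} {T : Finset ℕ} (hT : T ⊆ Finset.Icc 1 n) {m j : ℕ} (hj : j ∉ T)
    (hmj : m < j) : phiT T m < phiT T j := by
  rw [phiT_eq, phiT_eq]
  have h1 := cT_mono T (le_of_lt hmj)
  have h2 := cT_gap hT hj hmj
  have h3 := cT_le hT m
  omega

lemma phiT_pos {n : ℕ} {T : Finset ℕ} (hT : T ⊆ Finset.Icc 1 n) {i : ℕ} (hi : i ∉ T)
    (h1 : 1 ≤ i) : 1 ≤ phiT T i := by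
  have := cT_lt hT hi
  rw [phiT_eq]; omega

lemma phiT_le {n : ℕ} {T : Finset ℕ} (hT : T ⊆ Finset.Icc 1 n) (hcard : T.card = 2)
    {i : ℕ} (hi : i ≤ n) : phiT T i ≤ n - 2 := by
  have htot : cT T i + (T.filter (fun t => ¬ t ≤ i)).card = 2 := by
    rw [← hcard]; exact Finset.card_filter_add_card_filter_not _
  have hupper : (T.filter (fun t => ¬ t ≤ i)).card ≤ n - i := by
    have : T.filter (fun t => ¬ t ≤ i) ⊆ Finset.Icc (i+1) n := by
      intro t ht
      simp only [Finset.mem_filter, Finset.mem_Icc] at *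
      exact ⟨by omega, (Finset.mem_Icc.1 (hT ht.1)).2⟩
    calc _ ≤ (Finset.Icc (i+1) n).card := Finset.card_le_card this
      _ = n - i := by rw [Nat.card_Icc]; omega
  rw [phiT_eq]; omega

end Stmt18
namespace Stmt18

variable {n : ℕ} {T : Finset ℕ}

/-- complement of T in [1,n] -/
noncomputable def comp (n : ℕ) (T : Finset ℕ) : Finset ℕ := (Finset.Icc 1 n) \ T

lemma mem_comp {i : ℕ} : i ∈ comp n T ↔ (1 ≤ i ∧ i ≤ n ∧ i ∉ T) := by
  rw [comp, Finset.mem_sdiff, Finset.mem_Icc, and_assoc]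

lemma card_comp (hT : T ⊆ Finset.Icc 1 n) (hcard : T.card = 2) :
    (comp n T).card = n - 2 := by
  rw [comp, Finset.card_sdiff_of_subset hT, Nat.card_Icc, hcard]; omega

lemma phiT_injOn (hT : T ⊆ Finset.Icc 1 n) :
    Set.InjOn (phiT T) (comp n T) := by
  intro i hi j hj hij
  have hi' := mem_comp.1 (by exact_mod_cast hi)
  have hj' := mem_comp.1 (by exact_mod_cast hj)
  rcases lt_trichotomy i j with hc | hc | hc
  · exact absurd hij (Nat.ne_of_lt (phiT_lt hT hj'.2.2 hc))
  · exact hc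
  · exact absurd hij.symm (Nat.ne_of_lt (phiT_lt hT hi'.2.2 hc))

lemma phiT_image (hT : T ⊆ Finset.Icc 1 n) (hcard : T.card = 2) :
    (comp n T).image (phiT T) = Finset.Icc 1 (n - 2) := by
  apply Finset.eq_of_subset_of_card_le
  · intro r hr
    rw [Finset.mem_image] at hr
    obtain ⟨i, hi, rfl⟩ := hr
    rw [mem_comp] at hi
    exact Finset.mem_Icc.2 ⟨phiT_pos hT hi.2.2 hi.1, phiT_le hT hcard hi.2.1⟩
  · rw [Nat.card_Icc, Finset.card_image_of_injOn (phiT_injOn hT), card_comp hT hcard]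
    omega

lemma psiT_spec (hT : T ⊆ Finset.Icc 1 n) (hcard : T.card = 2) {r : ℕ}
    (hr : 1 ≤ r) (hr2 : r ≤ n - 2) :
    psiT n T r ∈ comp n T ∧ phiT T (psiT n T r) = r := by
  have : r ∈ (comp n T).image (phiT T) := by
    rw [phiT_image hT hcard]; exact Finset.mem_Icc.2 ⟨hr, hr2⟩
  rw [Finset.mem_image] at this
  obtain ⟨i, hi, hphi⟩ := this
  rw [mem_comp] at hi
  have hne : {i | 1 ≤ i ∧ i ≤ n ∧ i ∉ T ∧ phiT T i = r}.Nonempty :=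
    ⟨i, hi.1, hi.2.1, hi.2.2, hphi⟩
  have := Nat.sInf_mem hne
  exact ⟨mem_comp.2 ⟨this.1, this.2.1, this.2.2.1⟩, this.2.2.2⟩

lemma psiT_mem_of_pos (h1 : 1 ≤ psiT n T r) :
    psiT n T r ∈ comp n T ∧ phiT T (psiT n T r) = r := by
  by_cases hne : {i | 1 ≤ i ∧ i ≤ n ∧ i ∉ T ∧ phiT T i = r}.Nonempty
  · have := Nat.sInf_mem hne
    exact ⟨mem_comp.2 ⟨this.1, this.2.1, this.2.2.1⟩, this.2.2.2⟩
  · exfalso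
    rw [Set.not_nonempty_iff_eq_empty] at hne
    have : psiT n T r = 0 := by
      rw [psiT, Nat.sInf_eq_zero]; exact Or.inr hne
    omega

lemma psiT_phiT (hT : T ⊆ Finset.Icc 1 n) (hcard : T.card = 2) {i : ℕ}
    (hi : i ∈ comp n T) : psiT n T (phiT T i) = i := by
  rw [mem_comp] at hi
  have hrange : 1 ≤ phiT T i ∧ phiT T i ≤ n - 2 :=
    ⟨phiT_pos hT hi.2.2 hi.1, phiT_le hT hcard hi.2.1⟩
  obtain ⟨hmem, hval⟩ := psiT_spec hT hcard hrange.1 hrange.2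
  exact phiT_injOn hT (by exact_mod_cast hmem) (by exact_mod_cast mem_comp.2 hi) hval

end Stmt18
namespace Stmt18

variable {n : ℕ} {T : Finset ℕ} {h : ℕ → ℕ} {ω : ℕ → ℕ → Bool}

lemma hFunT_apply (hT : T ⊆ Finset.Icc 1 n) (hcard : T.card = 2) {i : ℕ}
    (hi : i ∈ comp n T) : hFunT n h T (phiT T i) = phiT T (h i) := by
  rw [hFunT, psiT_phiT hT hcard hi]

lemma edge_equiv (hT : T ⊆ Finset.Icc 1 n) (hcard : T.card = 2) {i j : ℕ}
    (hi : i ∈ comp n T) (hj : j ∈ comp n T) :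
    IsEdge n h i j ↔ IsEdge (n - 2) (hFunT n h T) (phiT T i) (phiT T j) := by
  have hi' := mem_comp.1 hi
  have hj' := mem_comp.1 hj
  constructor
  · rintro ⟨h1, h2, h3, h4⟩
    refine ⟨phiT_pos hT hi'.2.2 h1, phiT_lt hT hj'.2.2 h2, phiT_le hT hcard h3, ?_⟩
    rw [hFunT_apply hT hcard hi]
    exact phiT_mono h4
  · rintro ⟨h1, h2, h3, h4⟩
    rw [hFunT_apply hT hcard hi] at h4
    refine ⟨hi'.1, ?_, hj'.2.1, ?_⟩
    · by_contra hc
      exact absurd (phiT_mono (T := T) (by omega : j ≤ i)) (by omega)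
    · by_contra hc
      exact absurd (phiT_lt hT hj'.2.2 (by omega : h i < j)) (by omega)

lemma sinkAt_of_sinks_eq (hs : sinks n h ω = T) {t : ℕ} (ht : t ∈ T) :
    IsSinkAt n h ω t := by
  rw [← hs, sinks, Finset.mem_filter] at ht
  exact ht.2

lemma edge_asymm {u v : ℕ} (e : IsEdge n h u v) : ¬ IsEdge n h v u := by
  rintro ⟨_, h2, _, _⟩
  exact absurd e.2.1 (by omega)

lemma sink_in (hs : ∀ t ∈ T, IsSinkAt n h ω t) {t u : ℕ} (ht : t ∈ T)
    (e : IsEdge n h u t) : ω u t = true := by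
  rcases hs t ht u (Or.inl e) with ⟨_, hv⟩ | ⟨e', _⟩
  · exact hv
  · exact absurd e' (edge_asymm e)

lemma sink_out (hs : ∀ t ∈ T, IsSinkAt n h ω t) {t u : ℕ} (ht : t ∈ T)
    (e : IsEdge n h t u) : ω t u = false := by
  rcases hs t ht u (Or.inr e) with ⟨e', _⟩ | ⟨_, hv⟩
  · exact absurd e' (edge_asymm e)
  · exact hv

lemma no_T_edge (hac : AcyclicOr n h ω) (hs : ∀ t ∈ T, IsSinkAt n h ω t)
    {t t' : ℕ} (ht : t ∈ T) (ht' : t' ∈ T) : ¬ IsEdge n h t t' := by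
  intro e
  have d1 : Dir n h ω t t' := hs t' ht' t (Or.inl e)
  have d2 : Dir n h ω t' t := hs t ht t' (Or.inr e)
  exact hac t (Relation.TransGen.head d1 (Relation.TransGen.single d2))

/-- the forward map: restriction of an orientation to the complement of T. -/
noncomputable def Fmap (n : ℕ) (T : Finset ℕ) (ω : ℕ → ℕ → Bool) : ℕ → ℕ → Bool :=
  fun r s => ω (psiT n T r) (psiT n T s)

lemma asc_decomp (hT : T ⊆ Finset.Icc 1 n) (hcard : T.card = 2)
    (hs : ∀ t ∈ T, IsSinkAt n h ω t) :
    ascOr n h ω = ascOr (n - 2) (hFunT n h T) (Fmap n T ω) + degT n h T := by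
  classical
  set P := (Finset.Icc 1 n) ×ˢ (Finset.Icc 1 n) with hP
  set A := P.filter (fun p => IsEdge n h p.1 p.2 ∧ ω p.1 p.2 = true) with hA
  have hsplit : (A.filter (fun p => p.2 ∈ T)).card
      + (A.filter (fun p => ¬ p.2 ∈ T)).card = A.card :=
    Finset.card_filter_add_card_filter_not _
  have hdeg : A.filter (fun p => p.2 ∈ T) = P.filter (fun p => IsEdge n h p.1 p.2 ∧ p.2 ∈ T) := by
    ext p
    simp only [hA, Finset.mem_filter, and_assoc]
    constructor
    · rintro ⟨hm, he, _, ht⟩; exact ⟨hm, he, ht⟩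
    · rintro ⟨hm, he, ht⟩; exact ⟨hm, he, sink_in hs ht he, ht⟩
  set S := P.filter (fun p => IsEdge n h p.1 p.2 ∧ ω p.1 p.2 = true ∧ p.1 ∉ T ∧ p.2 ∉ T)
    with hS
  have hrest : A.filter (fun p => ¬ p.2 ∈ T) = S := by
    ext p
    simp only [hA, hS, Finset.mem_filter, and_assoc]
    constructor
    · rintro ⟨hm, he, hv, ht⟩
      refine ⟨hm, he, hv, ?_, ht⟩
      intro hc
      rw [sink_out hs hc he] at hv
      exact absurd hv (by simp)
    · rintro ⟨hm, he, hv, h1, h2⟩; exact ⟨hm, he, hv, h2⟩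
  have hbij : S.card = ascOr (n - 2) (hFunT n h T) (Fmap n T ω) := by
    rw [ascOr]
    apply Finset.card_bij (fun p _ => (phiT T p.1, phiT T p.2))
    · rintro p hp
      rw [hS, Finset.mem_filter, hP, Finset.mem_product] at hp
      obtain ⟨⟨hm1, hm2⟩, he, hv, h1, h2⟩ := hp
      have hc1 : p.1 ∈ comp n T := mem_comp.2 ⟨(Finset.mem_Icc.1 hm1).1, (Finset.mem_Icc.1 hm1).2, h1⟩
      have hc2 : p.2 ∈ comp n T := mem_comp.2 ⟨(Finset.mem_Icc.1 hm2).1, (Finset.mem_Icc.1 hm2).2, h2⟩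
      have he' := (edge_equiv hT hcard hc1 hc2).1 he
      rw [Finset.mem_filter, Finset.mem_product]
      refine ⟨⟨Finset.mem_Icc.2 ⟨he'.1, le_trans (le_of_lt he'.2.1) he'.2.2.1⟩,
        Finset.mem_Icc.2 ⟨le_trans he'.1 (le_of_lt he'.2.1), he'.2.2.1⟩⟩, he', ?_⟩
      show ω (psiT n T (phiT T p.1)) (psiT n T (phiT T p.2)) = true
      rw [psiT_phiT hT hcard hc1, psiT_phiT hT hcard hc2]
      exact hv
    · rintro p hp q hq hpq
      rw [hS, Finset.mem_filter, hP, Finset.mem_product] at hp hq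
      obtain ⟨⟨hm1, hm2⟩, _, _, h1, h2⟩ := hp
      obtain ⟨⟨hn1, hn2⟩, _, _, g1, g2⟩ := hq
      have hc1 : p.1 ∈ comp n T := mem_comp.2 ⟨(Finset.mem_Icc.1 hm1).1, (Finset.mem_Icc.1 hm1).2, h1⟩
      have hc2 : p.2 ∈ comp n T := mem_comp.2 ⟨(Finset.mem_Icc.1 hm2).1, (Finset.mem_Icc.1 hm2).2, h2⟩
      have hd1 : q.1 ∈ comp n T := mem_comp.2 ⟨(Finset.mem_Icc.1 hn1).1, (Finset.mem_Icc.1 hn1).2, g1⟩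
      have hd2 : q.2 ∈ comp n T := mem_comp.2 ⟨(Finset.mem_Icc.1 hn2).1, (Finset.mem_Icc.1 hn2).2, g2⟩
      have e1 : phiT T p.1 = phiT T q.1 := congrArg Prod.fst hpq
      have e2 : phiT T p.2 = phiT T q.2 := congrArg Prod.snd hpq
      exact Prod.ext (phiT_injOn hT (by exact_mod_cast hc1) (by exact_mod_cast hd1) e1)
        (phiT_injOn hT (by exact_mod_cast hc2) (by exact_mod_cast hd2) e2)
    · rintro q hq
      rw [Finset.mem_filter, Finset.mem_product] at hq
      obtain ⟨⟨hm1, hm2⟩, he', hv⟩ := hq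
      obtain ⟨hp1, hq1⟩ := psiT_spec hT hcard (Finset.mem_Icc.1 hm1).1 (Finset.mem_Icc.1 hm1).2
      obtain ⟨hp2, hq2⟩ := psiT_spec hT hcard (Finset.mem_Icc.1 hm2).1 (Finset.mem_Icc.1 hm2).2
      refine ⟨(psiT n T q.1, psiT n T q.2), ?_, ?_⟩
      · rw [hS, Finset.mem_filter, hP, Finset.mem_product]
        have hm1' := mem_comp.1 hp1
        have hm2' := mem_comp.1 hp2
        refine ⟨⟨Finset.mem_Icc.2 ⟨hm1'.1, hm1'.2.1⟩, Finset.mem_Icc.2 ⟨hm2'.1, hm2'.2.1⟩⟩,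
          ?_, hv, hm1'.2.2, hm2'.2.2⟩
        rw [edge_equiv hT hcard hp1 hp2, hq1, hq2]
        exact he'
      · simp only [hq1, hq2]
  rw [ascOr, ← hA, ← hsplit, hdeg, hrest, hbij, degT, ← hP]
  ring

end Stmt18
namespace Stmt18

variable {n : ℕ} {T : Finset ℕ} {h : ℕ → ℕ} {ω ω' : ℕ → ℕ → Bool}

lemma Fmap_norm (hT : T ⊆ Finset.Icc 1 n) (hcard : T.card = 2)
    (hnorm : NormOr n h ω) : NormOr (n - 2) (hFunT n h T) (Fmap n T ω) := by
  intro r s hne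
  show ω (psiT n T r) (psiT n T s) = false
  apply hnorm
  intro he
  have h1 : 1 ≤ psiT n T r := he.1
  have h2 : 1 ≤ psiT n T s := le_trans he.1 (le_of_lt he.2.1)
  obtain ⟨hc1, hq1⟩ := psiT_mem_of_pos (T := T) h1
  obtain ⟨hc2, hq2⟩ := psiT_mem_of_pos (T := T) h2
  have := (edge_equiv hT hcard hc1 hc2).1 he
  rw [hq1, hq2] at this
  exact hne this

lemma Fmap_acyclic (hT : T ⊆ Finset.Icc 1 n) (hcard : T.card = 2)
    (hac : AcyclicOr n h ω) : AcyclicOr (n - 2) (hFunT n h T) (Fmap n T ω) := by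
  intro v hcyc
  have hlift : ∀ r s, Dir (n - 2) (hFunT n h T) (Fmap n T ω) r s →
      Dir n h ω (psiT n T r) (psiT n T s) := by
    intro r s hd
    rcases hd with ⟨e', hv⟩ | ⟨e', hv⟩
    · obtain ⟨hc1, hq1⟩ := psiT_spec hT hcard e'.1 (le_trans (le_of_lt e'.2.1) e'.2.2.1)
      obtain ⟨hc2, hq2⟩ := psiT_spec hT hcard (le_trans e'.1 (le_of_lt e'.2.1)) e'.2.2.1
      refine Or.inl ⟨?_, hv⟩
      rw [edge_equiv hT hcard hc1 hc2, hq1, hq2]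
      exact e'
    · obtain ⟨hc2, hq2⟩ := psiT_spec hT hcard e'.1 (le_trans (le_of_lt e'.2.1) e'.2.2.1)
      obtain ⟨hc1, hq1⟩ := psiT_spec hT hcard (le_trans e'.1 (le_of_lt e'.2.1)) e'.2.2.1
      refine Or.inr ⟨?_, hv⟩
      rw [edge_equiv hT hcard hc2 hc1, hq1, hq2]
      exact e'
  exact hac (psiT n T v) (Relation.TransGen.lift (psiT n T) hlift _ _ hcyc)

/-- the backward map: extend an orientation of `Γ_{h_T}` by directing everything into `T`. -/
noncomputable def Gmap (n : ℕ) (h : ℕ → ℕ) (T : Finset ℕ) (ω' : ℕ → ℕ → Bool) :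
    ℕ → ℕ → Bool :=
  fun u v => decide (IsEdge n h u v ∧
    (v ∈ T ∨ (u ∉ T ∧ ω' (phiT T u) (phiT T v) = true)))

lemma Gmap_norm : NormOr n h (Gmap n h T ω') := by
  intro u v hne
  simp only [Gmap, decide_eq_false_iff_not]
  rintro ⟨he, _⟩
  exact hne he

lemma Gmap_dir (hT : T ⊆ Finset.Icc 1 n) (hcard : T.card = 2)
    (hnorm' : NormOr (n - 2) (hFunT n h T) ω') {u v : ℕ}
    (hd : Dir n h (Gmap n h T ω') u v) :
    v ∈ T ∨ (u ∉ T ∧ v ∉ T ∧ Dir (n - 2) (hFunT n h T) ω' (phiT T u) (phiT T v)) := by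
  rcases hd with ⟨e, hv⟩ | ⟨e, hv⟩
  · rw [Gmap, decide_eq_true_eq] at hv
    by_cases hvT : v ∈ T
    · exact Or.inl hvT
    · rcases hv.2 with hvT' | ⟨huT, hval⟩
      · exact Or.inl hvT'
      · refine Or.inr ⟨huT, hvT, Or.inl ⟨?_, hval⟩⟩
        by_contra hne
        rw [hnorm' _ _ hne] at hval
        exact absurd hval (by simp)
  · rw [Gmap, decide_eq_false_iff_not] at hv
    have hv' : ¬ (u ∈ T ∨ (v ∉ T ∧ ω' (phiT T v) (phiT T u) = true)) := fun hc => hv ⟨e, hc⟩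
    push_neg at hv'
    obtain ⟨huT, hv2⟩ := hv'
    by_cases hvT : v ∈ T
    · exact Or.inl hvT
    · have hval : ω' (phiT T v) (phiT T u) = false := by
        rcases Bool.eq_false_or_eq_true (ω' (phiT T v) (phiT T u)) with hb | hb
        · exact absurd hb (hv2 hvT)
        · exact hb
      have hcv : v ∈ comp n T := mem_comp.2 ⟨e.1, le_trans (le_of_lt e.2.1) e.2.2.1, hvT⟩
      have hcu : u ∈ comp n T := mem_comp.2 ⟨le_trans e.1 (le_of_lt e.2.1), e.2.2.1, huT⟩
      exact Or.inr ⟨huT, hvT, Or.inr ⟨(edge_equiv hT hcard hcv hcu).1 e, hval⟩⟩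

lemma Gmap_no_out (hnoTT : ∀ t ∈ T, ∀ t' ∈ T, ¬ IsEdge n h t t') {t w : ℕ}
    (ht : t ∈ T) : ¬ Dir n h (Gmap n h T ω') t w := by
  rintro (⟨e, hv⟩ | ⟨e, hv⟩)
  · rw [Gmap, decide_eq_true_eq] at hv
    rcases hv.2 with hwT | ⟨htT, _⟩
    · exact hnoTT t ht w hwT e
    · exact htT ht
  · rw [Gmap, decide_eq_false_iff_not] at hv
    exact hv ⟨e, Or.inl ht⟩

lemma Gmap_acyclic (hT : T ⊆ Finset.Icc 1 n) (hcard : T.card = 2)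
    (hnoTT : ∀ t ∈ T, ∀ t' ∈ T, ¬ IsEdge n h t t')
    (hnorm' : NormOr (n - 2) (hFunT n h T) ω')
    (hac' : AcyclicOr (n - 2) (hFunT n h T) ω') :
    AcyclicOr n h (Gmap n h T ω') := by
  intro v hcyc
  by_cases hvT : v ∈ T
  · obtain ⟨c, hd, -⟩ := (Relation.TransGen.head'_iff).1 hcyc
    exact Gmap_no_out hnoTT hvT hd
  · have key : ∀ b, Relation.TransGen (Dir n h (Gmap n h T ω')) v b → b ∉ T →
        Relation.TransGen (Dir (n - 2) (hFunT n h T) ω') (phiT T v) (phiT T b) := by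
      intro b hb
      induction hb with
      | single hstep =>
        intro hbT
        rcases Gmap_dir hT hcard hnorm' hstep with h1 | ⟨_, _, hd⟩
        · exact absurd h1 hbT
        · exact Relation.TransGen.single hd
      | tail hpath hstep ih =>
        intro hcT
        have hbT : _ ∉ T := fun hb => Gmap_no_out hnoTT hb hstep
        rcases Gmap_dir hT hcard hnorm' hstep with h1 | ⟨_, _, hd⟩
        · exact absurd h1 hcT
        · exact Relation.TransGen.tail (ih hbT) hd
    exact hac' (phiT T v) (key v hcyc hvT)

lemma Gmap_sinks_superset (hT : T ⊆ Finset.Icc 1 n)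
    (hnoTT : ∀ t ∈ T, ∀ t' ∈ T, ¬ IsEdge n h t t') :
    T ⊆ sinks n h (Gmap n h T ω') := by
  intro t ht
  rw [sinks, Finset.mem_filter]
  refine ⟨hT ht, ?_⟩
  intro u hedge
  rcases hedge with e | e
  · refine Or.inl ⟨e, ?_⟩
    rw [Gmap, decide_eq_true_eq]
    exact ⟨e, Or.inl ht⟩
  · refine Or.inr ⟨e, ?_⟩
    rw [Gmap, decide_eq_false_iff_not]
    rintro ⟨_, huT | ⟨htT, _⟩⟩
    · exact hnoTT t ht u huT e
    · exact htT ht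

lemma sinks_card_le (hac : AcyclicOr n h ω) (hm : maxSinkSize n h = 2) :
    (sinks n h ω).card ≤ 2 := by
  have hb : BddAbove {k | ∃ ω, AcyclicOr n h ω ∧ (sinks n h ω).card = k} := by
    refine ⟨n, ?_⟩
    rintro k ⟨σ, _, hk⟩
    rw [← hk]
    calc (sinks n h σ).card ≤ (Finset.Icc 1 n).card := Finset.card_filter_le _ _
      _ = n := by rw [Nat.card_Icc]; omega
  have := le_csSup hb (Set.mem_setOf.2 ⟨ω, hac, rfl⟩)
  rwa [← maxSinkSize, hm] at this

lemma GF_id (hT : T ⊆ Finset.Icc 1 n) (hcard : T.card = 2) (hnorm : NormOr n h ω)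
    (hs : ∀ t ∈ T, IsSinkAt n h ω t) : Gmap n h T (Fmap n T ω) = ω := by
  funext u v
  by_cases he : IsEdge n h u v
  · by_cases hvT : v ∈ T
    · rw [sink_in hs hvT he]
      exact decide_eq_true ⟨he, Or.inl hvT⟩
    · by_cases huT : u ∈ T
      · rw [sink_out hs huT he]
        rw [Gmap, decide_eq_false_iff_not]
        rintro ⟨_, hvT' | ⟨huT', _⟩⟩
        · exact hvT hvT'
        · exact huT' huT
      · have hcu : u ∈ comp n T := mem_comp.2 ⟨he.1, le_trans (le_of_lt he.2.1) he.2.2.1, huT⟩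
        have hcv : v ∈ comp n T := mem_comp.2 ⟨le_trans he.1 (le_of_lt he.2.1), he.2.2.1, hvT⟩
        show decide _ = ω u v
        rcases Bool.eq_false_or_eq_true (ω u v) with hb | hb
        · rw [hb, decide_eq_true_eq]
          refine ⟨he, Or.inr ⟨huT, ?_⟩⟩
          rw [Fmap, psiT_phiT hT hcard hcu, psiT_phiT hT hcard hcv]
          exact hb
        · rw [hb, decide_eq_false_iff_not]
          rintro ⟨_, hvT' | ⟨_, hval⟩⟩
          · exact hvT hvT'
          · rw [Fmap, psiT_phiT hT hcard hcu, psiT_phiT hT hcard hcv, hb] at hval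
            exact absurd hval (by simp)
  · rw [hnorm u v he, Gmap, decide_eq_false_iff_not]
    rintro ⟨he', _⟩
    exact he he'

lemma FG_id (hT : T ⊆ Finset.Icc 1 n) (hcard : T.card = 2)
    (hnorm' : NormOr (n - 2) (hFunT n h T) ω') :
    Fmap n T (Gmap n h T ω') = ω' := by
  funext r s
  show Gmap n h T ω' (psiT n T r) (psiT n T s) = ω' r s
  by_cases he' : IsEdge (n - 2) (hFunT n h T) r s
  · obtain ⟨hc1, hq1⟩ := psiT_spec hT hcard he'.1 (le_trans (le_of_lt he'.2.1) he'.2.2.1)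
    obtain ⟨hc2, hq2⟩ := psiT_spec hT hcard (le_trans he'.1 (le_of_lt he'.2.1)) he'.2.2.1
    have he : IsEdge n h (psiT n T r) (psiT n T s) := by
      rw [edge_equiv hT hcard hc1 hc2, hq1, hq2]; exact he'
    have h2T : psiT n T s ∉ T := (mem_comp.1 hc2).2.2
    have h1T : psiT n T r ∉ T := (mem_comp.1 hc1).2.2
    show decide _ = ω' r s
    rcases Bool.eq_false_or_eq_true (ω' r s) with hb | hb
    · rw [hb, decide_eq_true_eq]
      refine ⟨he, Or.inr ⟨h1T, ?_⟩⟩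
      rw [hq1, hq2]
      exact hb
    · rw [hb, decide_eq_false_iff_not]
      rintro ⟨_, hvT | ⟨_, hval⟩⟩
      · exact h2T hvT
      · rw [hq1, hq2, hb] at hval
        exact absurd hval (by simp)
  · rw [hnorm' r s he']
    show decide _ = false
    rw [decide_eq_false_iff_not]
    rintro ⟨he, _⟩
    have h1 : 1 ≤ psiT n T r := he.1
    have h2 : 1 ≤ psiT n T s := le_trans he.1 (le_of_lt he.2.1)
    obtain ⟨hc1, hq1⟩ := psiT_mem_of_pos (T := T) h1
    obtain ⟨hc2, hq2⟩ := psiT_mem_of_pos (T := T) h2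
    have := (edge_equiv hT hcard hc1 hc2).1 he
    rw [hq1, hq2] at this
    exact he' this

end Stmt18
namespace Stmt18

variable {n : ℕ} {T : Finset ℕ} {h : ℕ → ℕ}

lemma norm_finite (n : ℕ) (h : ℕ → ℕ) : {ω : ℕ → ℕ → Bool | NormOr n h ω}.Finite := by
  classical
  apply Set.Finite.of_finite_image (f := fun ω (p : Fin (n+1) × Fin (n+1)) => ω p.1 p.2)
  · exact Set.Finite.subset (Set.finite_univ) (Set.subset_univ _)
  · intro ω1 h1 ω2 h2 heq
    funext u v
    by_cases hc : u ≤ n ∧ v ≤ n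
    · exact congrFun heq (⟨u, by omega⟩, ⟨v, by omega⟩)
    · have hne : ¬ IsEdge n h u v := by
        rintro ⟨e1, e2, e3, e4⟩
        exact hc ⟨by omega, e3⟩
      rw [h1 u v hne, h2 u v hne]

lemma ncard_biUnion {α β : Type*} (s : Finset α) (f : α → Set β)
    (hfin : ∀ a ∈ s, (f a).Finite)
    (hdisj : ∀ a ∈ s, ∀ b ∈ s, a ≠ b → Disjoint (f a) (f b)) :
    (⋃ a ∈ s, f a).ncard = ∑ a ∈ s, (f a).ncard := by
  classical
  induction s using Finset.cons_induction with
  | empty => simp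
  | cons a s ha ih =>
    have hU : (⋃ b ∈ Finset.cons a s ha, f b) = f a ∪ ⋃ b ∈ s, f b := by
      ext x
      simp [Finset.mem_cons, or_and_right, Set.mem_iUnion]
    rw [hU, Finset.sum_cons]
    have hd : Disjoint (f a) (⋃ b ∈ s, f b) := by
      rw [Set.disjoint_iUnion₂_right]
      intro b hb
      exact hdisj a (Finset.mem_cons_self a s) b (Finset.mem_cons_of_mem hb)
        (fun hab => ha (hab ▸ hb))
    have hfinU : (⋃ b ∈ s, f b).Finite :=
      Set.Finite.biUnion (s.finite_toSet) (fun b hb => hfin b (Finset.mem_cons_of_mem hb))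
    rw [Set.ncard_union_eq hd (hfin a (Finset.mem_cons_self a s)) hfinU]
    rw [ih (fun b hb => hfin b (Finset.mem_cons_of_mem hb))
      (fun b hb c hc => hdisj b (Finset.mem_cons_of_mem hb) c (Finset.mem_cons_of_mem hc))]

/-- the per-sink-set counting identity -/
lemma key_count (hT : T ⊆ Finset.Icc 1 n) (hcard : T.card = 2)
    (hm : maxSinkSize n h = 2) (hss : IsSinkSet n h T) (i : ℕ) :
    Set.ncard {ω : ℕ → ℕ → Bool | NormOr n h ω ∧ AcyclicOr n h ω ∧
        sinks n h ω = T ∧ ascOr n h ω = i} =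
      (if degT n h T ≤ i then
        Set.ncard {ω' : ℕ → ℕ → Bool |
          NormOr (n - 2) (hFunT n h T) ω' ∧
          AcyclicOr (n - 2) (hFunT n h T) ω' ∧
          ascOr (n - 2) (hFunT n h T) ω' = i - degT n h T}
      else 0) := by
  obtain ⟨σ, hacσ, hsσ⟩ := hss
  have hnoTT : ∀ t ∈ T, ∀ t' ∈ T, ¬ IsEdge n h t t' :=
    fun t ht t' ht' => no_T_edge hacσ (fun u hu => sinkAt_of_sinks_eq hsσ hu) ht ht'
  set X := {ω : ℕ → ℕ → Bool | NormOr n h ω ∧ AcyclicOr n h ω ∧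
      sinks n h ω = T ∧ ascOr n h ω = i} with hX
  set Y := {ω' : ℕ → ℕ → Bool |
      NormOr (n - 2) (hFunT n h T) ω' ∧
      AcyclicOr (n - 2) (hFunT n h T) ω' ∧
      ascOr (n - 2) (hFunT n h T) ω' = i - degT n h T} with hY
  by_cases hdeg : degT n h T ≤ i
  · rw [if_pos hdeg]
    have hinj : Set.InjOn (Fmap n T) X := by
      intro ω1 h1 ω2 h2 heq
      rw [hX, Set.mem_setOf_eq] at h1 h2
      calc ω1 = Gmap n h T (Fmap n T ω1) :=
            (GF_id hT hcard h1.1 (fun t ht => sinkAt_of_sinks_eq h1.2.2.1 ht)).symm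
        _ = Gmap n h T (Fmap n T ω2) := by rw [heq]
        _ = ω2 := GF_id hT hcard h2.1 (fun t ht => sinkAt_of_sinks_eq h2.2.2.1 ht)
    have himg : Fmap n T '' X = Y := by
      apply Set.eq_of_subset_of_subset
      · rintro ω' ⟨ω, hω, rfl⟩
        rw [hX, Set.mem_setOf_eq] at hω
        obtain ⟨hnorm, hac, hsk, hasc⟩ := hω
        have hsT : ∀ t ∈ T, IsSinkAt n h ω t := fun t ht => sinkAt_of_sinks_eq hsk ht
        have hdec := asc_decomp hT hcard hsT
        rw [hY, Set.mem_setOf_eq]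
        exact ⟨Fmap_norm hT hcard hnorm, Fmap_acyclic hT hcard hac, by omega⟩
      · intro ω' hω'
        rw [hY, Set.mem_setOf_eq] at hω'
        obtain ⟨hnorm', hac', hasc'⟩ := hω'
        refine ⟨Gmap n h T ω', ?_, FG_id hT hcard hnorm'⟩
        have hacG : AcyclicOr n h (Gmap n h T ω') :=
          Gmap_acyclic hT hcard hnoTT hnorm' hac'
        have hskG : sinks n h (Gmap n h T ω') = T := by
          refine (Finset.eq_of_subset_of_card_le (Gmap_sinks_superset hT hnoTT) ?_).symm
          rw [hcard]
          exact sinks_card_le hacG hm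
        have hsT : ∀ t ∈ T, IsSinkAt n h (Gmap n h T ω') t :=
          fun t ht => sinkAt_of_sinks_eq hskG ht
        have hdec := asc_decomp hT hcard hsT
        rw [FG_id hT hcard hnorm'] at hdec
        rw [hX, Set.mem_setOf_eq]
        exact ⟨Gmap_norm, hacG, hskG, by omega⟩
    rw [← himg, Set.ncard_image_of_injOn hinj]
  · rw [if_neg hdeg]
    have : X = ∅ := by
      rw [Set.eq_empty_iff_forall_notMem]
      intro ω hω
      rw [hX, Set.mem_setOf_eq] at hω
      obtain ⟨hnorm, hac, hsk, hasc⟩ := hω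
      have hdec := asc_decomp hT hcard (fun t ht => sinkAt_of_sinks_eq hsk ht)
      omega
    rw [this, Set.ncard_empty]

end Stmt18

theorem stmt18 (n : ℕ) (h : ℕ → ℕ) (hn : 1 ≤ n) (hh : IsHessenberg n h)
    (hm : maxSinkSize n h = 2) :
    ∀ i : ℕ,
      Set.ncard {ω : ℕ → ℕ → Bool | NormOr n h ω ∧ AcyclicOr n h ω ∧
          (sinks n h ω).card = 2 ∧ ascOr n h ω = i} =
        ∑ T ∈ (Finset.Icc 1 n).powerset.filter
            (fun T => IsSinkSet n h T ∧ T.card = 2),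
          (if degT n h T ≤ i then
            Set.ncard {ω' : ℕ → ℕ → Bool |
              NormOr (n - 2) (hFunT n h T) ω' ∧
              AcyclicOr (n - 2) (hFunT n h T) ω' ∧
              ascOr (n - 2) (hFunT n h T) ω' = i - degT n h T}
          else 0) := by
  intro i
  classical
  set 𝒯 := (Finset.Icc 1 n).powerset.filter (fun T => IsSinkSet n h T ∧ T.card = 2) with h𝒯
  set X := fun (T : Finset ℕ) => {ω : ℕ → ℕ → Bool | NormOr n h ω ∧ AcyclicOr n h ω ∧
      sinks n h ω = T ∧ ascOr n h ω = i} with hXdef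
  have hun : {ω : ℕ → ℕ → Bool | NormOr n h ω ∧ AcyclicOr n h ω ∧
      (sinks n h ω).card = 2 ∧ ascOr n h ω = i} = ⋃ T ∈ 𝒯, X T := by
    ext ω
    simp only [Set.mem_setOf_eq, Set.mem_iUnion, hXdef]
    constructor
    · rintro ⟨hnorm, hac, hc, hasc⟩
      refine ⟨sinks n h ω, ?_, hnorm, hac, rfl, hasc⟩
      rw [h𝒯, Finset.mem_filter, Finset.mem_powerset]
      exact ⟨Finset.filter_subset _ _, ⟨ω, hac, rfl⟩, hc⟩
    · rintro ⟨T, hT𝒯, hnorm, hac, hsk, hasc⟩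
      rw [h𝒯, Finset.mem_filter] at hT𝒯
      exact ⟨hnorm, hac, hsk ▸ hT𝒯.2.2, hasc⟩
  rw [hun, Stmt18.ncard_biUnion]
  · apply Finset.sum_congr rfl
    intro T hT𝒯
    rw [h𝒯, Finset.mem_filter, Finset.mem_powerset] at hT𝒯
    exact Stmt18.key_count hT𝒯.1 hT𝒯.2.2 hm hT𝒯.2.1 i
  · intro T _
    exact Set.Finite.subset (Stmt18.norm_finite n h) (fun ω hω => hω.1)
  · intro T1 h1 T2 h2 hne
    rw [Set.disjoint_left]
    rintro ω hω1 hω2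
    exact hne (hω1.2.2.1 ▸ hω2.2.2.1)
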